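/- Let R be a commutative noetherian ring and a ⊊ R a proper ideal, with ψ : R → R̂ the natural map to the a-adic completion. Then the map m ↦ mR̂ gives a bijection from the set of maximal ideals of R containing a onto the set of maximal ideals of R̂, with inverse given by contraction along ψ. -/

import Mathlib

open AdicCompletion TensorProduct

namespace MaxAdicAux

variable {R : Type*} [CommRing R] (a : Ideal R)

lemma hsm (n : ℕ) : (a ^ n • ⊤ : Ideal R) = a ^ n := by
  rw [Ideal.smul_eq_mul, Ideal.mul_top]

lemma hsm1 : (a ^ 1 • ⊤ : Submodule R R) = a := by
  rw [pow_one, Ideal.smul_eq_mul, Ideal.mul_top]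

/-- Evaluation at level 1 as a ring hom. -/
def e : AdicCompletion a R →+* R ⧸ (a ^ 1 • ⊤ : Ideal R) where
  toFun z := z.val 1
  map_one' := rfl
  map_mul' _ _ := rfl
  map_zero' := rfl
  map_add' _ _ := rfl

lemma e_comp : (e a).comp (algebraMap R (AdicCompletion a R))
    = Ideal.Quotient.mk (a ^ 1 • ⊤ : Ideal R) := rfl

lemma e_surj : Function.Surjective (e a) := by
  intro y
  obtain ⟨r, rfl⟩ := Ideal.Quotient.mk_surjective y
  exact ⟨algebraMap R (AdicCompletion a R) r, rfl⟩

lemma mem_of_val_one_zero (f : AdicCauchySequence a R)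
    (h : (AdicCompletion.mk a R f).val 1 = 0) {n : ℕ} (hn : 1 ≤ n) : f.val n ∈ a := by
  rw [mk_apply_coe, Submodule.mkQ_apply, Submodule.Quotient.mk_eq_zero, hsm1] at h
  have h2 : f.val 1 - f.val n ∈ a := by
    have := SModEq.sub_mem.mp (f.property hn)
    rwa [hsm1] at this
  have : f.val n = f.val 1 - (f.val 1 - f.val n) := by ring
  rw [this]
  exact Submodule.sub_mem _ h h2

/-- Topological nilpotency of elements of the kernel of the level-1 evaluation. -/
lemma pow_val_self (x : AdicCompletion a R) (hx : x.val 1 = 0) (n : ℕ) :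
    (x ^ n).val n = 0 := by
  obtain ⟨f, rfl⟩ := AdicCompletion.mk_surjective a R x
  rcases Nat.eq_zero_or_pos n with h0 | hn
  · subst h0
    have hs : Subsingleton (R ⧸ (a ^ 0 • ⊤ : Submodule R R)) := by
      rw [Submodule.Quotient.subsingleton_iff]
      rw [pow_zero, one_smul]
    exact Subsingleton.elim _ _
  · have hfn : f.val n ∈ a := mem_of_val_one_zero a f hx hn
    have hps : (AdicCompletion.mk a R f) ^ n = AdicCompletion.mk a R (f ^ n) :=
      (map_pow (mkₐ a) f n).symm
    rw [hps, mk_apply_coe, Submodule.mkQ_apply, Submodule.Quotient.mk_eq_zero]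
    have : (f ^ n).val n = (f.val n) ^ n := rfl
    rw [this, hsm a n]
    exact Ideal.pow_mem_pow hfn n

lemma val_pow (x : AdicCompletion a R) (k n : ℕ) : (x ^ k).val n = (x.val n) ^ k := by
  induction k with
  | zero => simp
  | succ k ih => rw [pow_succ, val_mul, ih, pow_succ]

/-- `1 - x` is a unit for `x` in the kernel of the level-1 evaluation. -/
lemma isUnit_one_sub (x : AdicCompletion a R) (hx : x.val 1 = 0) : IsUnit (1 - x) := by
  have hval : ∀ n, (x ^ n).val n = 0 := pow_val_self a x hx
  refine IsUnit.of_mul_eq_one (⟨fun n => ∑ k ∈ Finset.range n, (x ^ k).val n, ?_⟩ : AdicCompletion a R) ?_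
  · intro m n hmn
    show transitionMap a R hmn (∑ k ∈ Finset.range n, (x ^ k).val n) = _
    rw [map_sum]
    rw [Finset.sum_congr rfl (fun k _ => (x ^ k).property hmn)]
    refine (Finset.sum_subset (Finset.range_subset_range.mpr hmn) ?_).symm
    intro k hk hk'
    have hm : m ≤ k := le_of_not_gt (fun h => hk' (Finset.mem_range.mpr h))
    have : x ^ k = x ^ m * x ^ (k - m) := by rw [← pow_add, Nat.add_sub_cancel' hm]
    rw [this, val_mul, hval m, zero_mul]
  · ext n
    show (1 - x.val n) * (∑ k ∈ Finset.range n, (x ^ k).val n) = 1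
    rw [Finset.sum_congr rfl (fun k _ => val_pow a x k n)]
    have hg := geom_sum_mul (x.val n) n
    have h2 : (1 - x.val n) * ∑ k ∈ Finset.range n, (x.val n) ^ k
        = 1 - (x.val n) ^ n := by linear_combination -hg
    rw [h2, ← val_pow a x n n, hval n, sub_zero]

/-- The kernel of the level-1 evaluation is the extension of `a` (Noetherian case). -/
lemma ker_e [IsNoetherianRing R] :
    RingHom.ker (e a) = a.map (algebraMap R (AdicCompletion a R)) := by
  apply le_antisymm
  · intro x hx
    have hx' : x.val 1 = 0 := hx
    have hfin : Module.Finite R (R ⧸ a) :=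
      Module.Finite.of_surjective (Submodule.mkQ (a : Submodule R R))
        (Submodule.Quotient.mk_surjective _)
    have hinj := (ofTensorProduct_bijective_of_finite_of_isNoetherian a (R ⧸ a)).injective
    have h0 : ofTensorProduct a (R ⧸ a) (x ⊗ₜ (1 : R ⧸ a)) = 0 := by
      rw [ofTensorProduct_tmul]
      obtain ⟨f, rfl⟩ := AdicCompletion.mk_surjective a R x
      ext n
      rw [smul_eval, val_zero]
      rcases Nat.eq_zero_or_pos n with h0 | hn
      · subst h0
        have hs : Subsingleton ((R ⧸ a) ⧸ (a ^ 0 • ⊤ : Submodule R (R ⧸ a))) := by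
          rw [Submodule.Quotient.subsingleton_iff, pow_zero, one_smul]
        exact Subsingleton.elim _ _
      · have hfn : f.val n ∈ a := mem_of_val_one_zero a f hx' hn
        have e1 : (f.val n • (1 : R ⧸ a)) = 0 := by
          rw [← Algebra.algebraMap_eq_smul_one, Ideal.Quotient.algebraMap_eq]
          exact Ideal.Quotient.eq_zero_iff_mem.mpr hfn
        rw [mk_apply_coe, Submodule.mkQ_apply, of_apply, Submodule.mkQ_apply]
        calc Submodule.Quotient.mk (p := (a ^ n • ⊤ : Ideal R)) (f.val n) •
              Submodule.Quotient.mk (p := (a ^ n • ⊤ : Submodule R (R ⧸ a))) (1 : R ⧸ a)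
            = f.val n • Submodule.Quotient.mk (p := (a ^ n • ⊤ : Submodule R (R ⧸ a)))
              (1 : R ⧸ a) :=
              AdicCompletion.mk_smul_mk (I := a ^ n) (M := R ⧸ a) (f.val n) (1 : R ⧸ a)
          _ = Submodule.Quotient.mk (f.val n • (1 : R ⧸ a)) := rfl
          _ = 0 := by rw [e1]; exact (Submodule.Quotient.mk_eq_zero _).mpr (Submodule.zero_mem _)
    have htz : x ⊗ₜ (1 : R ⧸ a) = (0 : AdicCompletion a R ⊗[R] (R ⧸ a)) := by
      apply hinj
      rw [h0, _root_.map_zero]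
    have h1 : Submodule.Quotient.mk (p := (a • ⊤ : Submodule R (AdicCompletion a R))) x = 0 := by
      have h2 : (TensorProduct.tensorQuotEquivQuotSMul (AdicCompletion a R) a)
          (x ⊗ₜ (1 : R ⧸ a)) = Submodule.Quotient.mk ((1 : R) • x) := by
        rw [show (1 : R ⧸ a) = Ideal.Quotient.mk a 1 from rfl]
        exact TensorProduct.tensorQuotEquivQuotSMul_tmul_mk a x 1
      rw [htz] at h2
      have hz0 : (TensorProduct.tensorQuotEquivQuotSMul (AdicCompletion a R) a)
          (0 : AdicCompletion a R ⊗[R] (R ⧸ a)) = 0 :=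
        (TensorProduct.tensorQuotEquivQuotSMul (AdicCompletion a R) a).toLinearMap.map_zero
      rw [hz0] at h2
      rw [← one_smul R x]
      exact h2.symm
    rw [Submodule.Quotient.mk_eq_zero, Ideal.smul_top_eq_map] at h1
    exact h1
  · rw [Ideal.map_le_iff_le_comap]
    intro r hr
    rw [Ideal.mem_comap, RingHom.mem_ker]
    show Ideal.Quotient.mk (a ^ 1 • ⊤ : Ideal R) r = 0
    rw [Ideal.Quotient.eq_zero_iff_mem]
    exact (hsm1 a).symm ▸ hr

/-- Image of a maximal ideal containing the kernel under a surjective ring hom is maximal. -/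
lemma map_isMaximal_of_surjective {A B : Type*} [CommRing A] [CommRing B] (f : A →+* B)
    (hf : Function.Surjective f) {I : Ideal A} (hI : I.IsMaximal) (hker : RingHom.ker f ≤ I) :
    (I.map f).IsMaximal := by
  rcases Ideal.map_eq_top_or_isMaximal_of_surjective f hf hI with h | h
  · exfalso
    have h2 := congrArg (Ideal.comap f) h
    rw [Ideal.comap_top, Ideal.comap_map_of_surjective f hf, ← RingHom.ker_eq_comap_bot,
      sup_eq_left.mpr hker] at h2
    exact hI.ne_top h2
  · exact h

end MaxAdicAux

/-- The map `m ↦ m R̂` is a bijection from the set of maximal ideals of `R` containing `a`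
onto the set of maximal ideals of the `a`-adic completion `R̂`, with inverse given by
contraction along the canonical map `ψ : R → R̂`. -/
theorem maximal_ideal_bijection_adicCompletion
    (R : Type*) [CommRing R] [IsNoetherianRing R] (a : Ideal R) (ha : a ≠ ⊤) :
    (∀ m : Ideal R, m.IsMaximal → a ≤ m →
      (m.map (algebraMap R (AdicCompletion a R))).IsMaximal ∧
      (m.map (algebraMap R (AdicCompletion a R))).comap
        (algebraMap R (AdicCompletion a R)) = m) ∧
    (∀ M : Ideal (AdicCompletion a R), M.IsMaximal →
      (M.comap (algebraMap R (AdicCompletion a R))).IsMaximal ∧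
      a ≤ M.comap (algebraMap R (AdicCompletion a R)) ∧
      (M.comap (algebraMap R (AdicCompletion a R))).map
        (algebraMap R (AdicCompletion a R)) = M) := by
  have hsurj := MaxAdicAux.e_surj a
  have hker := MaxAdicAux.ker_e a
  have hcomp := MaxAdicAux.e_comp a
  have ha1 : (a ^ 1 • ⊤ : Ideal R) = a := MaxAdicAux.hsm1 a
  have hmksurj : Function.Surjective (Ideal.Quotient.mk (a ^ 1 • ⊤ : Ideal R)) :=
    Ideal.Quotient.mk_surjective
  have hkerm : RingHom.ker (Ideal.Quotient.mk (a ^ 1 • ⊤ : Ideal R)) = (a ^ 1 • ⊤ : Ideal R) :=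
    Ideal.mk_ker
  -- the key identity: for `a ≤ m`, the extension of `m` is the preimage under `e` of the
  -- image of `m` in `R ⧸ a`.
  have hkey : ∀ m : Ideal R, a ≤ m →
      Ideal.map (algebraMap R (AdicCompletion a R)) m = Ideal.comap (MaxAdicAux.e a)
        (Ideal.map (Ideal.Quotient.mk (a ^ 1 • ⊤ : Ideal R)) m) := by
    intro m ham
    apply le_antisymm
    · rw [Ideal.map_le_iff_le_comap]
      intro r hrm
      rw [Ideal.mem_comap, Ideal.mem_comap]
      have h3 : (MaxAdicAux.e a) (algebraMap R (AdicCompletion a R) r)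
          = Ideal.Quotient.mk (a ^ 1 • ⊤ : Ideal R) r := rfl
      rw [h3]
      exact Ideal.mem_map_of_mem _ hrm
    · have h1 : Ideal.map (Ideal.Quotient.mk (a ^ 1 • ⊤ : Ideal R)) m
          = Ideal.map (MaxAdicAux.e a)
            (Ideal.map (algebraMap R (AdicCompletion a R)) m) := by
        rw [Ideal.map_map, hcomp]
      rw [h1, Ideal.comap_map_of_surjective _ hsurj, ← RingHom.ker_eq_comap_bot, hker]
      exact sup_le le_rfl (Ideal.map_mono ham)
  constructor
  · -- extension direction
    intro m hm ham
    have hker_le : RingHom.ker (Ideal.Quotient.mk (a ^ 1 • ⊤ : Ideal R)) ≤ m := by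
      rw [hkerm, ha1]; exact ham
    have hmax1 : (Ideal.map (Ideal.Quotient.mk (a ^ 1 • ⊤ : Ideal R)) m).IsMaximal :=
      MaxAdicAux.map_isMaximal_of_surjective _ hmksurj hm hker_le
    constructor
    · rw [hkey m ham]
      haveI := hmax1
      exact Ideal.comap_isMaximal_of_surjective _ hsurj
    · rw [hkey m ham, Ideal.comap_comap, hcomp, Ideal.comap_map_of_surjective _ hmksurj,
        ← RingHom.ker_eq_comap_bot, hkerm]
      exact sup_eq_left.mpr (by rw [ha1]; exact ham)
  · -- contraction direction
    intro M hM
    -- the kernel of `e` lies in the Jacobson radical, hence in `M`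
    have hjac : RingHom.ker (MaxAdicAux.e a) ≤ M := by
      intro x hx
      have hx1 : x.val 1 = 0 := hx
      have hxj : x ∈ Ideal.jacobson (⊥ : Ideal (AdicCompletion a R)) := by
        rw [Ideal.mem_jacobson_bot]
        intro y
        have hz : (x * y).val 1 = 0 := by rw [val_mul, hx1, zero_mul]
        have hz' : (-(x * y)).val 1 = 0 := by
          have : (-(x * y)).val 1 = -((x * y).val 1) := rfl
          rw [this, hz, neg_zero]
        have hu := MaxAdicAux.isUnit_one_sub a (-(x * y)) hz'
        rw [sub_neg_eq_add, add_comm] at hu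
        exact hu
      have hle : Ideal.jacobson (⊥ : Ideal (AdicCompletion a R)) ≤ M :=
        sInf_le (show M ∈ {J : Ideal (AdicCompletion a R) | ⊥ ≤ J ∧ J.IsMaximal}
          from ⟨bot_le, hM⟩)
      exact hle hxj
    have hMM : Ideal.comap (MaxAdicAux.e a) (Ideal.map (MaxAdicAux.e a) M) = M := by
      rw [Ideal.comap_map_of_surjective _ hsurj, ← RingHom.ker_eq_comap_bot]
      exact sup_eq_left.mpr hjac
    have hmax2 : (Ideal.map (MaxAdicAux.e a) M).IsMaximal :=
      MaxAdicAux.map_isMaximal_of_surjective _ hsurj hM hjac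
    have hc : Ideal.comap (algebraMap R (AdicCompletion a R)) M
        = Ideal.comap (Ideal.Quotient.mk (a ^ 1 • ⊤ : Ideal R))
          (Ideal.map (MaxAdicAux.e a) M) := by
      rw [← hMM, Ideal.comap_comap, hcomp, hMM]
    have hJM : Ideal.map (algebraMap R (AdicCompletion a R)) a ≤ M := by
      rw [← hker]; exact hjac
    have haM : a ≤ Ideal.comap (algebraMap R (AdicCompletion a R)) M := by
      intro r hr
      exact hJM (Ideal.mem_map_of_mem _ hr)
    refine ⟨?_, haM, ?_⟩
    · rw [hc]
      haveI := hmax2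
      exact Ideal.comap_isMaximal_of_surjective _ hmksurj
    · rw [hkey _ haM, hc, Ideal.map_comap_of_surjective _ hmksurj, hMM]
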